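/- Let Y ⊆ 𝒢⁽⁰⁾ be a domain of asymptotic expansion. Then for any α ∈ (0, 1/2] and β ∈ [1/2, 1), there exist C > 0 and a unital symmetric decomposable K ⊆ 𝒢 of finite length such that for any measurable A ⊆ Y with α·μ(Y) ≤ μ(A) ≤ β·μ(Y), one has μ((r(K·A) \ A) ∩ Y) > C·μ(A). -/

import Mathlib

open MeasureTheory Set

/-- An algebraic groupoid: a set `G` with a distinguished unit space,
source and range maps, a (total, but only meaningful on composable pairs)
multiplication and an inverse. -/
structure AlgGroupoid (G : Type*) where
  unitSpace : Set G
  s : G → G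
  r : G → G
  mul : G → G → G
  inv : G → G
  s_mem : ∀ γ, s γ ∈ unitSpace
  r_mem : ∀ γ, r γ ∈ unitSpace
  s_unit : ∀ x ∈ unitSpace, s x = x
  r_unit : ∀ x ∈ unitSpace, r x = x
  s_mul : ∀ γ₁ γ₂, s γ₁ = r γ₂ → s (mul γ₁ γ₂) = s γ₂
  r_mul : ∀ γ₁ γ₂, s γ₁ = r γ₂ → r (mul γ₁ γ₂) = r γ₁
  mul_assoc' : ∀ γ₁ γ₂ γ₃, s γ₁ = r γ₂ → s γ₂ = r γ₃ →
    mul (mul γ₁ γ₂) γ₃ = mul γ₁ (mul γ₂ γ₃)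
  unit_mul : ∀ γ, mul (r γ) γ = γ
  mul_unit : ∀ γ, mul γ (s γ) = γ
  s_inv : ∀ γ, s (inv γ) = r γ
  r_inv : ∀ γ, r (inv γ) = s γ
  mul_inv : ∀ γ, mul γ (inv γ) = r γ
  inv_mul : ∀ γ, mul (inv γ) γ = s γ

namespace AlgGroupoid

variable {G : Type*} (𝒢 : AlgGroupoid G)

/-- `A⁻¹ = {γ⁻¹ : γ ∈ A}`. -/
def invSet (A : Set G) : Set G := 𝒢.inv '' A

/-- `A · B = {γ₁γ₂ : γ₁ ∈ A, γ₂ ∈ B, s(γ₁) = r(γ₂)}`. -/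
def mulSet (A B : Set G) : Set G :=
  {γ | ∃ γ₁ ∈ A, ∃ γ₂ ∈ B, 𝒢.s γ₁ = 𝒢.r γ₂ ∧ γ = 𝒢.mul γ₁ γ₂}

/-- `r (K ⋅ A)` for `A` a subset of the unit space. -/
def rMul (K A : Set G) : Set G := 𝒢.r '' {γ | γ ∈ K ∧ 𝒢.s γ ∈ A}

/-- A length function on a groupoid. -/
structure IsLength (ℓ : G → ℝ) : Prop where
  nonneg : ∀ γ, 0 ≤ ℓ γ
  unit_zero : ∀ x ∈ 𝒢.unitSpace, ℓ x = 0
  inv_eq : ∀ γ, ℓ (𝒢.inv γ) = ℓ γ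
  subadd : ∀ γ₁ γ₂, 𝒢.s γ₁ = 𝒢.r γ₂ → ℓ (𝒢.mul γ₁ γ₂) ≤ ℓ γ₁ + ℓ γ₂

/-- A bisection: both source and range maps are injective on it. -/
def IsBisection (K : Set G) : Prop := Set.InjOn 𝒢.s K ∧ Set.InjOn 𝒢.r K

/-- `ℓ(K) ≤ L`. -/
def lengthLE (ℓ : G → ℝ) (K : Set G) (L : ℝ) : Prop := ∀ γ ∈ K, ℓ γ ≤ L

variable [MeasurableSpace G]

/-- An admissible bisection: the source and range sets are measurable, the induced
bijection `τ_K = r|_K ∘ (s|_K)⁻¹` is a measure-class-preserving measurable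
isomorphism (formulated at the level of sets), and `ℓ(K) < ∞`. -/
structure IsAdmissible (ℓ : G → ℝ) (μ : Measure G) (K : Set G) : Prop where
  bisection : 𝒢.IsBisection K
  source_meas : MeasurableSet (𝒢.s '' K)
  range_meas : MeasurableSet (𝒢.r '' K)
  image_meas : ∀ A : Set G, MeasurableSet A → A ⊆ 𝒢.s '' K → MeasurableSet (𝒢.rMul K A)
  preimage_meas : ∀ B : Set G, MeasurableSet B → B ⊆ 𝒢.r '' K →
    MeasurableSet (𝒢.rMul (𝒢.invSet K) B)
  null_iff : ∀ A : Set G, MeasurableSet A → A ⊆ 𝒢.s '' K →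
    (μ (𝒢.rMul K A) = 0 ↔ μ A = 0)
  length_bdd : ∃ L : ℝ, ∀ γ ∈ K, ℓ γ ≤ L

/-- `K` is decomposable: a finite union of admissible bisections. -/
def IsDecomposable (ℓ : G → ℝ) (μ : Measure G) (K : Set G) : Prop :=
  ∃ (N : ℕ) (Ks : Fin N → Set G),
    (∀ i, 𝒢.IsAdmissible ℓ μ (Ks i)) ∧ K = ⋃ i, Ks i

/-- `K` is unital symmetric `N`-decomposable. -/
def IsUSDecomposable (ℓ : G → ℝ) (μ : Measure G) (N : ℕ) (K : Set G) : Prop :=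
  ∃ Ks : Fin N → Set G,
    (∀ i, 𝒢.IsAdmissible ℓ μ (Ks i)) ∧ K = ⋃ i, Ks i ∧
    (∃ i, Ks i = 𝒢.unitSpace) ∧
    (∃ σ : Equiv.Perm (Fin N), ∀ i, 𝒢.invSet (Ks i) = Ks (σ i))

/-- `𝒢` is asymptotically expanding in measure `μ`. -/
def AsympExpanding (ℓ : G → ℝ) (μ : Measure G) : Prop :=
  ∀ α : ℝ, 0 < α → α ≤ 1 / 2 →
    ∃ (C L : ℝ) (N : ℕ) (K : Set G), 0 < C ∧
      𝒢.IsUSDecomposable ℓ μ N K ∧ lengthLE ℓ K L ∧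
      ∀ A : Set G, MeasurableSet A → A ⊆ 𝒢.unitSpace →
        α ≤ (μ A).toReal → (μ A).toReal ≤ 1 / 2 →
        C * (μ A).toReal < (μ (𝒢.rMul K A \ A)).toReal

/-- `Y` is a domain of asymptotic expansion. -/
def DomainAsympExp (ℓ : G → ℝ) (μ : Measure G) (Y : Set G) : Prop :=
  ∀ α : ℝ, 0 < α → α ≤ 1 / 2 →
    ∃ (C L : ℝ) (N : ℕ) (K : Set G), 0 < C ∧
      𝒢.IsUSDecomposable ℓ μ N K ∧ lengthLE ℓ K L ∧
      ∀ A : Set G, MeasurableSet A → A ⊆ Y →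
        α * (μ Y).toReal ≤ (μ A).toReal → (μ A).toReal ≤ (μ Y).toReal / 2 →
        C * (μ A).toReal < (μ ((𝒢.rMul K A \ A) ∩ Y)).toReal

end AlgGroupoid

namespace AlgGroupoid

variable {G : Type*}

lemma rMul_mono_right (𝒢 : AlgGroupoid G) (K : Set G) {A B : Set G} (h : A ⊆ B) :
    𝒢.rMul K A ⊆ 𝒢.rMul K B :=
  image_mono fun γ hγ => ⟨hγ.1, h hγ.2⟩

lemma rMul_mono_left (𝒢 : AlgGroupoid G) {K K' : Set G} (h : K ⊆ K') (A : Set G) :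
    𝒢.rMul K A ⊆ 𝒢.rMul K' A :=
  image_mono fun γ hγ => ⟨h hγ.1, hγ.2⟩

lemma rMul_empty (𝒢 : AlgGroupoid G) (K : Set G) : 𝒢.rMul K ∅ = ∅ := by
  simp [rMul]

lemma rMul_inter_source (𝒢 : AlgGroupoid G) (K A : Set G) :
    𝒢.rMul K (A ∩ 𝒢.s '' K) = 𝒢.rMul K A := by
  have hset : {γ | γ ∈ K ∧ 𝒢.s γ ∈ A ∩ 𝒢.s '' K} = {γ | γ ∈ K ∧ 𝒢.s γ ∈ A} := by
    ext γ
    exact ⟨fun h => ⟨h.1, h.2.1⟩, fun h => ⟨h.1, ⟨h.2, mem_image_of_mem _ h.1⟩⟩⟩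
  unfold rMul
  rw [hset]

lemma rMul_iUnion_left (𝒢 : AlgGroupoid G) {ι : Sort*} (Ks : ι → Set G) (A : Set G) :
    𝒢.rMul (⋃ i, Ks i) A = ⋃ i, 𝒢.rMul (Ks i) A := by
  have hset : {γ | γ ∈ ⋃ i, Ks i ∧ 𝒢.s γ ∈ A} = ⋃ i, {γ | γ ∈ Ks i ∧ 𝒢.s γ ∈ A} := by
    ext γ
    simp only [mem_iUnion, mem_setOf_eq]
    tauto
  unfold rMul
  rw [hset, image_iUnion]

lemma rMul_iInter (𝒢 : AlgGroupoid G) {K : Set G} (hinj : Set.InjOn 𝒢.r K)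
    {ι : Sort*} [Nonempty ι] (F : ι → Set G) :
    𝒢.rMul K (⋂ i, F i) = ⋂ i, 𝒢.rMul K (F i) := by
  apply subset_antisymm
  · exact subset_iInter fun i => 𝒢.rMul_mono_right K (iInter_subset F i)
  · intro x hx
    have i₀ : ι := Classical.arbitrary ι
    obtain ⟨γ, ⟨hγK, hγs⟩, hγr⟩ := mem_iInter.mp hx i₀
    refine ⟨γ, ⟨hγK, mem_iInter.mpr fun i => ?_⟩, hγr⟩
    obtain ⟨γ', ⟨hγ'K, hγ's⟩, hγ'r⟩ := mem_iInter.mp hx i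
    have hgg : γ = γ' := hinj hγK hγ'K (by rw [hγr, hγ'r])
    rw [hgg]; exact hγ's

lemma IsAdmissible.measurableSet_rMul [MeasurableSpace G] {𝒢 : AlgGroupoid G}
    {ℓ : G → ℝ} {μ : Measure G} {K : Set G} (h : 𝒢.IsAdmissible ℓ μ K)
    {A : Set G} (hA : MeasurableSet A) : MeasurableSet (𝒢.rMul K A) := by
  rw [← 𝒢.rMul_inter_source K A]
  exact h.image_meas _ (hA.inter h.source_meas) inter_subset_right

/-- Quantitative (ε-δ) form of measure-class preservation for an admissible bisection. -/
lemma IsAdmissible.eps_delta [MeasurableSpace G] {𝒢 : AlgGroupoid G}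
    {ℓ : G → ℝ} {μ : Measure G} [IsFiniteMeasure μ] {K : Set G}
    (h : 𝒢.IsAdmissible ℓ μ K) {ε : ENNReal} (hε : 0 < ε) :
    ∃ δ : ENNReal, 0 < δ ∧ ∀ E : Set G, MeasurableSet E → E ⊆ 𝒢.s '' K →
      μ E < δ → μ (𝒢.rMul K E) < ε := by
  by_contra hcon
  push_neg at hcon
  have hpos : ∀ n : ℕ, (0 : ENNReal) < 2⁻¹ ^ n := fun n =>
    ENNReal.pow_pos (ENNReal.inv_pos.mpr ENNReal.ofNat_ne_top) n
  choose E hEm hEs hElt hEge using fun n : ℕ => hcon (2⁻¹ ^ n) (hpos n)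
  set F : ℕ → Set G := fun n => ⋃ (k) (_ : n ≤ k), E k with hF
  have hFm : ∀ n, MeasurableSet (F n) := fun n =>
    MeasurableSet.iUnion fun k => MeasurableSet.iUnion fun _ => hEm k
  have hFs : ∀ n, F n ⊆ 𝒢.s '' K := fun n =>
    iUnion_subset fun k => iUnion_subset fun _ => hEs k
  have hFanti : ∀ {m n : ℕ}, m ≤ n → F n ⊆ F m := by
    intro m n hmn
    exact iUnion_subset fun k => iUnion_subset fun hk x hx =>
      mem_iUnion₂.mpr ⟨k, hmn.trans hk, hx⟩
  have hEF : ∀ n, E n ⊆ F n := fun n x hx => mem_iUnion₂.mpr ⟨n, le_rfl, hx⟩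
  have hTm : MeasurableSet (⋂ n, F n) := MeasurableSet.iInter hFm
  have hTs : (⋂ n, F n) ⊆ 𝒢.s '' K := (iInter_subset F 0).trans (hFs 0)
  have hT0 : μ (⋂ n, F n) = 0 := by
    have hbound : ∀ n, μ (⋂ m, F m) ≤ 2⁻¹ ^ n * 2 := by
      intro n
      have h1 : (⋂ m, F m) ⊆ ⋃ k, E (n + k) := by
        refine (iInter_subset F n).trans ?_
        intro x hx
        rcases mem_iUnion₂.mp hx with ⟨k, hk, hxk⟩
        exact mem_iUnion.mpr ⟨k - n, by rwa [Nat.add_sub_cancel' hk]⟩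
      calc μ (⋂ m, F m) ≤ ∑' k, μ (E (n + k)) :=
            (measure_mono h1).trans (measure_iUnion_le _)
        _ ≤ ∑' k : ℕ, 2⁻¹ ^ (n + k) := ENNReal.tsum_le_tsum fun k => (hElt (n + k)).le
        _ = 2⁻¹ ^ n * ∑' k : ℕ, 2⁻¹ ^ k := by
            simp_rw [pow_add]; exact ENNReal.tsum_mul_left
        _ = 2⁻¹ ^ n * 2 := by
            rw [ENNReal.tsum_geometric, ENNReal.one_sub_inv_two, inv_inv]
    have htend : Filter.Tendsto (fun n : ℕ => (2 : ENNReal)⁻¹ ^ n * 2)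
        Filter.atTop (nhds 0) := by
      have h2 := ENNReal.tendsto_pow_atTop_nhds_zero_of_lt_one
        (by norm_num : (2 : ENNReal)⁻¹ < 1)
      simpa using ENNReal.Tendsto.mul_const h2 (Or.inr ENNReal.ofNat_ne_top)
    exact le_antisymm (ge_of_tendsto' htend hbound) (zero_le)
  have hrT : μ (𝒢.rMul K (⋂ n, F n)) = 0 := (h.null_iff _ hTm hTs).mpr hT0
  have hdir : Directed (· ⊇ ·) fun n => 𝒢.rMul K (F n) := fun m n =>
    ⟨max m n, 𝒢.rMul_mono_right K (hFanti (le_max_left m n)),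
      𝒢.rMul_mono_right K (hFanti (le_max_right m n))⟩
  have hiInf : μ (𝒢.rMul K (⋂ n, F n)) = ⨅ n, μ (𝒢.rMul K (F n)) := by
    rw [𝒢.rMul_iInter h.bisection.2 F]
    exact Directed.measure_iInter (fun n => (h.measurableSet_rMul (hFm n)).nullMeasurableSet)
      hdir ⟨0, measure_ne_top μ _⟩
  have hge : ε ≤ μ (𝒢.rMul K (⋂ n, F n)) := by
    rw [hiInf]
    exact le_iInf fun n => (hEge n).trans (measure_mono (𝒢.rMul_mono_right K (hEF n)))
  rw [hrT] at hge
  exact hε.not_ge hge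

lemma IsUSDecomposable.union [MeasurableSpace G] {𝒢 : AlgGroupoid G}
    {ℓ : G → ℝ} {μ : Measure G} {N₁ N₂ : ℕ} {K₁ K₂ : Set G}
    (h₁ : 𝒢.IsUSDecomposable ℓ μ N₁ K₁) (h₂ : 𝒢.IsUSDecomposable ℓ μ N₂ K₂) :
    𝒢.IsUSDecomposable ℓ μ (N₁ + N₂) (K₁ ∪ K₂) := by
  obtain ⟨Ks₁, hadm₁, hEq₁, ⟨i₁, hu₁⟩, ⟨σ₁, hσ₁⟩⟩ := h₁
  obtain ⟨Ks₂, hadm₂, hEq₂, ⟨i₂, hu₂⟩, ⟨σ₂, hσ₂⟩⟩ := h₂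
  refine ⟨fun i => Sum.elim Ks₁ Ks₂ (finSumFinEquiv.symm i), ?_, ?_, ?_, ?_⟩
  · intro i
    rcases h : finSumFinEquiv.symm i with j | j
    · simpa [h] using hadm₁ j
    · simpa [h] using hadm₂ j
  · apply subset_antisymm
    · rintro γ (hγ | hγ)
      · rw [hEq₁] at hγ
        obtain ⟨j, hj⟩ := mem_iUnion.mp hγ
        exact mem_iUnion.mpr ⟨finSumFinEquiv (Sum.inl j), by simpa using hj⟩
      · rw [hEq₂] at hγ
        obtain ⟨j, hj⟩ := mem_iUnion.mp hγ
        exact mem_iUnion.mpr ⟨finSumFinEquiv (Sum.inr j), by simpa using hj⟩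
    · refine iUnion_subset fun i => ?_
      rcases h : finSumFinEquiv.symm i with j | j
      · simp only [h, Sum.elim_inl]
        exact (subset_iUnion Ks₁ j).trans (by rw [← hEq₁]; exact subset_union_left)
      · simp only [h, Sum.elim_inr]
        exact (subset_iUnion Ks₂ j).trans (by rw [← hEq₂]; exact subset_union_right)
  · exact ⟨finSumFinEquiv (Sum.inl i₁), by simpa using hu₁⟩
  · refine ⟨finSumFinEquiv.permCongr (σ₁.sumCongr σ₂), fun i => ?_⟩
    simp only [Equiv.permCongr_apply, Equiv.symm_apply_apply]
    rcases h : finSumFinEquiv.symm i with j | j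
    · simp only [h, Sum.elim_inl, Equiv.sumCongr_apply, Sum.map_inl]
      exact hσ₁ j
    · simp only [h, Sum.elim_inr, Equiv.sumCongr_apply, Sum.map_inr]
      exact hσ₂ j

end AlgGroupoid
/-- a domain of asymptotic expansion expands all sets of measure between
`α μ(Y)` and `β μ(Y)` for any `α ∈ (0,1/2]`, `β ∈ [1/2,1)`. -/
theorem stmt5 {G : Type*} [MeasurableSpace G] (𝒢 : AlgGroupoid G) (ℓ : G → ℝ)
    (μ : MeasureTheory.Measure G) [MeasureTheory.IsProbabilityMeasure μ]
    (Y : Set G) (hY : MeasurableSet Y) (hYsub : Y ⊆ 𝒢.unitSpace)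
    (hdom : 𝒢.DomainAsympExp ℓ μ Y)
    (α β : ℝ) (hα0 : 0 < α) (hα : α ≤ 1 / 2) (hβ1 : 1 / 2 ≤ β) (hβ : β < 1) :
    ∃ (C L : ℝ) (N : ℕ) (K : Set G), 0 < C ∧
      𝒢.IsUSDecomposable ℓ μ N K ∧ AlgGroupoid.lengthLE ℓ K L ∧
      ∀ A : Set G, MeasurableSet A → A ⊆ Y →
        α * (μ Y).toReal ≤ (μ A).toReal → (μ A).toReal ≤ β * (μ Y).toReal →
        C * (μ A).toReal < (μ ((𝒢.rMul K A \ A) ∩ Y)).toReal := by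
  have hY1 : μ Y ≠ ⊤ := measure_ne_top μ Y
  -- `μ Y` must be positive
  have hy0 : 0 < (μ Y).toReal := by
    rcases (ENNReal.toReal_nonneg (a := μ Y)).lt_or_eq with h | h
    · exact h
    · exfalso
      obtain ⟨C, L, N, K, hC, _, _, hexp⟩ := hdom (1 / 2) (by norm_num) le_rfl
      have h0 := hexp ∅ MeasurableSet.empty (empty_subset Y)
        (by simp [h.symm]) (by simp only [measure_empty, ENNReal.toReal_zero]; positivity)
      simpa [𝒢.rMul_empty] using h0
  obtain ⟨C₁, L₁, N₁, K₁, hC₁, hUS₁, hlen₁, hexp₁⟩ := hdom α hα0 hα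
  have hβ0 : 0 < 1 - β := by linarith
  obtain ⟨C₂, L₂, N₂, K₂, hC₂, hUS₂, hlen₂, hexp₂⟩ := hdom (1 - β) hβ0 (by linarith)
  have hUS₂' := hUS₂
  obtain ⟨Ks₂, hadm₂, hEq₂, ⟨i₂, hu₂⟩, ⟨σ₂, hσ₂⟩⟩ := hUS₂
  have hN₂ : (0 : ℝ) < N₂ := by exact_mod_cast i₂.pos
  set y := (μ Y).toReal with hy
  set ε₁ := C₂ * ((1 - β) * y) with hε₁def
  have hε₁ : 0 < ε₁ := mul_pos hC₂ (mul_pos hβ0 hy0)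
  have hεN : 0 < ε₁ / N₂ := div_pos hε₁ hN₂
  -- quantitative reverse bounds for each bisection of `K₂`
  have hδs : ∀ i : Fin N₂, ∃ δ : ENNReal, 0 < δ ∧ ∀ E : Set G, MeasurableSet E →
      E ⊆ 𝒢.s '' (Ks₂ i) → μ E < δ → μ (𝒢.rMul (Ks₂ i) E) < ENNReal.ofReal (ε₁ / N₂) :=
    fun i => (hadm₂ i).eps_delta (ENNReal.ofReal_pos.mpr hεN)
  choose δs hδpos hδkey using hδs
  haveI : Nonempty (Fin N₂) := ⟨i₂⟩
  have hne : (Finset.univ : Finset (Fin N₂)).Nonempty := ⟨i₂, Finset.mem_univ i₂⟩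
  set δmin : ENNReal := (Finset.univ.inf' hne δs) ⊓ 1 with hδmindef
  have hδmin0 : 0 < δmin :=
    lt_inf_iff.mpr ⟨(Finset.lt_inf'_iff hne).mpr fun i _ => hδpos i, zero_lt_one⟩
  have hδmint : δmin ≠ ⊤ := ne_top_of_le_ne_top ENNReal.one_ne_top inf_le_right
  set d := δmin.toReal with hddef
  have hd0 : 0 < d := ENNReal.toReal_pos hδmin0.ne' hδmint
  refine ⟨min C₁ (d / 2), max L₁ L₂, N₁ + N₂, K₁ ∪ K₂,
    lt_min hC₁ (by linarith), hUS₁.union hUS₂', ?_, ?_⟩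
  · rintro γ (hγ | hγ)
    · exact (hlen₁ γ hγ).trans (le_max_left _ _)
    · exact (hlen₂ γ hγ).trans (le_max_right _ _)
  intro A hA hAY hA1 hA2
  have haY : (μ A).toReal ≤ y := ENNReal.toReal_mono hY1 (measure_mono hAY)
  have ha1 : (μ A).toReal ≤ 1 := by
    have := ENNReal.toReal_mono ENNReal.one_ne_top (prob_le_one (μ := μ) (s := A))
    simpa using this
  have ha0 : 0 ≤ (μ A).toReal := ENNReal.toReal_nonneg
  by_cases hcase : (μ A).toReal ≤ y / 2
  · -- small case: use `K₁` directly
    have h1 := hexp₁ A hA hAY hA1 hcase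
    have hsub : (𝒢.rMul K₁ A \ A) ∩ Y ⊆ (𝒢.rMul (K₁ ∪ K₂) A \ A) ∩ Y :=
      inter_subset_inter_left _
        (diff_subset_diff_left (𝒢.rMul_mono_left subset_union_left A))
    have h2 : (μ ((𝒢.rMul K₁ A \ A) ∩ Y)).toReal ≤
        (μ ((𝒢.rMul (K₁ ∪ K₂) A \ A) ∩ Y)).toReal :=
      ENNReal.toReal_mono (measure_ne_top μ _) (measure_mono hsub)
    calc min C₁ (d / 2) * (μ A).toReal ≤ C₁ * (μ A).toReal :=
          mul_le_mul_of_nonneg_right (min_le_left _ _) ha0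
      _ < _ := lt_of_lt_of_le h1 h2
  · -- big case
    push_neg at hcase
    have hBm : MeasurableSet (Y \ A) := hY.diff hA
    have hμB : μ (Y \ A) = μ Y - μ A :=
      measure_diff hAY hA.nullMeasurableSet (measure_ne_top μ A)
    have hbval : (μ (Y \ A)).toReal = y - (μ A).toReal := by
      rw [hμB, ENNReal.toReal_sub_of_le (measure_mono hAY) hY1]
    have hb1 : (1 - β) * y ≤ (μ (Y \ A)).toReal := by
      rw [hbval]; nlinarith [hA2]
    have hb2 : (μ (Y \ A)).toReal ≤ y / 2 := by rw [hbval]; linarith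
    have h2 := hexp₂ (Y \ A) hBm diff_subset hb1 hb2
    set D := 𝒢.rMul K₂ A ∩ (Y \ A) with hD
    have hrK₂A : MeasurableSet (𝒢.rMul K₂ A) := by
      rw [hEq₂, 𝒢.rMul_iUnion_left]
      exact MeasurableSet.iUnion fun i => (hadm₂ i).measurableSet_rMul hA
    have hDm : MeasurableSet D := hrK₂A.inter hBm
    have hsym : ∀ γ ∈ K₂, 𝒢.inv γ ∈ K₂ := by
      intro γ hγ
      rw [hEq₂] at hγ ⊢
      obtain ⟨i, hi⟩ := mem_iUnion.mp hγ
      exact mem_iUnion.mpr ⟨σ₂ i, (hσ₂ i) ▸ mem_image_of_mem _ hi⟩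
    have hcont : (𝒢.rMul K₂ (Y \ A) \ (Y \ A)) ∩ Y ⊆ 𝒢.rMul K₂ D := by
      rintro x ⟨⟨hxr, hxB⟩, hxY⟩
      obtain ⟨γ, ⟨hγK, hγs⟩, hγr⟩ := hxr
      have hxA : x ∈ A := by
        by_contra hxA; exact hxB ⟨hxY, hxA⟩
      have hinv : 𝒢.inv γ ∈ K₂ := hsym γ hγK
      have hsA : 𝒢.s (𝒢.inv γ) ∈ A := by rw [𝒢.s_inv, hγr]; exact hxA
      have hsD : 𝒢.s γ ∈ D :=
        ⟨⟨𝒢.inv γ, ⟨hinv, hsA⟩, 𝒢.r_inv γ⟩, hγs⟩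
      exact ⟨γ, ⟨hγK, hsD⟩, hγr⟩
    have hc1 : ε₁ < (μ (𝒢.rMul K₂ D)).toReal := by
      have hle : ε₁ ≤ C₂ * (μ (Y \ A)).toReal := mul_le_mul_of_nonneg_left hb1 hC₂.le
      exact (lt_of_le_of_lt hle h2).trans_le
        (ENNReal.toReal_mono (measure_ne_top μ _) (measure_mono hcont))
    have hsum : (μ (𝒢.rMul K₂ D)).toReal ≤
        ∑ i : Fin N₂, (μ (𝒢.rMul (Ks₂ i) D)).toReal := by
      have hU : 𝒢.rMul K₂ D = ⋃ i, 𝒢.rMul (Ks₂ i) D := by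
        rw [hEq₂, 𝒢.rMul_iUnion_left]
      have h1 : μ (𝒢.rMul K₂ D) ≤ ∑ i : Fin N₂, μ (𝒢.rMul (Ks₂ i) D) := by
        rw [hU]
        simpa [tsum_fintype] using measure_iUnion_le (μ := μ) fun i => 𝒢.rMul (Ks₂ i) D
      calc (μ (𝒢.rMul K₂ D)).toReal
          ≤ (∑ i : Fin N₂, μ (𝒢.rMul (Ks₂ i) D)).toReal :=
            ENNReal.toReal_mono
              (ENNReal.sum_lt_top.mpr fun i _ => (measure_ne_top μ _).lt_top).ne h1
        _ = ∑ i : Fin N₂, (μ (𝒢.rMul (Ks₂ i) D)).toReal :=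
            ENNReal.toReal_sum fun i _ => measure_ne_top μ _
    have hex : ∃ i : Fin N₂, ε₁ / N₂ < (μ (𝒢.rMul (Ks₂ i) D)).toReal := by
      by_contra hall
      push_neg at hall
      have hs2 : ∑ i : Fin N₂, (μ (𝒢.rMul (Ks₂ i) D)).toReal ≤
          ∑ _i : Fin N₂, ε₁ / N₂ := Finset.sum_le_sum fun i _ => hall i
      rw [Finset.sum_const, Finset.card_univ, Fintype.card_fin, nsmul_eq_mul,
        mul_comm, div_mul_cancel₀ _ hN₂.ne'] at hs2
      linarith
    obtain ⟨i, hi⟩ := hex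
    have hkey : ¬ (μ (D ∩ 𝒢.s '' (Ks₂ i)) < δs i) := by
      intro hlt
      have h3 := hδkey i _ (hDm.inter (hadm₂ i).source_meas) inter_subset_right hlt
      rw [𝒢.rMul_inter_source] at h3
      exact absurd (ENNReal.toReal_lt_of_lt_ofReal h3) (not_lt.mpr hi.le)
    push_neg at hkey
    have hDge : δmin ≤ μ D :=
      le_trans (inf_le_left.trans (Finset.inf'_le δs (Finset.mem_univ i)))
        (hkey.trans (measure_mono inter_subset_left))
    have hdD : d ≤ (μ D).toReal := ENNReal.toReal_mono (measure_ne_top μ D) hDge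
    have hDsub : D ⊆ (𝒢.rMul (K₁ ∪ K₂) A \ A) ∩ Y := by
      rintro x ⟨hx1, hx2⟩
      exact ⟨⟨𝒢.rMul_mono_left subset_union_right A hx1, hx2.2⟩, hx2.1⟩
    have hfin : d ≤ (μ ((𝒢.rMul (K₁ ∪ K₂) A \ A) ∩ Y)).toReal :=
      hdD.trans (ENNReal.toReal_mono (measure_ne_top μ _) (measure_mono hDsub))
    calc min C₁ (d / 2) * (μ A).toReal ≤ (d / 2) * (μ A).toReal :=
          mul_le_mul_of_nonneg_right (min_le_right _ _) ha0
      _ ≤ d / 2 := mul_le_of_le_one_right (by linarith) ha1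
      _ < d := by linarith
      _ ≤ _ := hfin
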